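/- For 1 < p < ∞, the space ℓ^p satisfies property (m_p): for every weakly null sequence (xₙ) in ℓ^p and every x ∈ ℓ^p, limsupₙ ‖xₙ + x‖^p = limsupₙ ‖xₙ‖^p + ‖x‖^p. -/

import Mathlib

open Filter Topology
open scoped ENNReal

lemma aux_rpow_ineq {r : ℝ} (hr : 0 ≤ r) {ε a b : ℝ} (hε : 0 < ε) (ha : 0 ≤ a) (hb : 0 ≤ b) :
    (a + b) ^ r ≤ (1 + ε) ^ r * a ^ r + ((1 + ε) / ε) ^ r * b ^ r := by
  rcases le_or_gt b (ε * a) with h | h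
  · calc (a + b) ^ r ≤ ((1 + ε) * a) ^ r :=
          Real.rpow_le_rpow (by positivity) (by nlinarith) hr
    _ = (1 + ε) ^ r * a ^ r := Real.mul_rpow (by positivity) ha
    _ ≤ _ := le_add_of_nonneg_right (by positivity)
  · calc (a + b) ^ r ≤ ((1 + ε) / ε * b) ^ r := by
          refine Real.rpow_le_rpow (by positivity) ?_ hr
          rw [div_mul_eq_mul_div, le_div_iff₀ hε]; nlinarith
    _ = ((1 + ε) / ε) ^ r * b ^ r := Real.mul_rpow (by positivity) hb
    _ ≤ _ := le_add_of_nonneg_left (by positivity)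

lemma aux_tail {r ε : ℝ} (hr0 : 0 < r) (hε : 0 < ε) (u v : ℕ → ℝ)
    (hu : Summable fun k => ‖u k‖ ^ r) (hv : Summable fun k => ‖v k‖ ^ r)
    (huv : Summable fun k => ‖u k + v k‖ ^ r) :
    (∑' k, ‖u k + v k‖ ^ r) ≤
      (1 + ε) ^ r * (∑' k, ‖u k‖ ^ r) + ((1 + ε) / ε) ^ r * ∑' k, ‖v k‖ ^ r := by
  calc (∑' k, ‖u k + v k‖ ^ r)
      ≤ ∑' k, ((1 + ε) ^ r * ‖u k‖ ^ r + ((1 + ε) / ε) ^ r * ‖v k‖ ^ r) := by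
        refine Summable.tsum_le_tsum (fun k => ?_) huv
          ((hu.mul_left _).add (hv.mul_left _))
        calc ‖u k + v k‖ ^ r ≤ (‖u k‖ + ‖v k‖) ^ r :=
              Real.rpow_le_rpow (norm_nonneg _) (norm_add_le _ _) hr0.le
          _ ≤ _ := aux_rpow_ineq hr0.le hε (norm_nonneg _) (norm_nonneg _)
    _ = _ := by
        rw [Summable.tsum_add (hu.mul_left _) (hv.mul_left _), tsum_mul_left, tsum_mul_left]

lemma aux_tail' {r ε : ℝ} (hr0 : 0 < r) (hε : 0 < ε) (u v : ℕ → ℝ)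
    (hu : Summable fun k => ‖u k‖ ^ r) (hv : Summable fun k => ‖v k‖ ^ r)
    (huv : Summable fun k => ‖u k + v k‖ ^ r) :
    (∑' k, ‖u k‖ ^ r) ≤
      (1 + ε) ^ r * (∑' k, ‖u k + v k‖ ^ r) + ((1 + ε) / ε) ^ r * ∑' k, ‖v k‖ ^ r := by
  have h := aux_tail hr0 hε (fun k => u k + v k) (fun k => -v k) huv
    (by simpa using hv) (by simpa using hu)
  simpa using h

lemma aux_limsup_const_add (c : ℝ) (v : ℕ → ℝ)
    (h1 : IsBoundedUnder (· ≤ ·) atTop v) (h2 : IsBoundedUnder (· ≥ ·) atTop v) :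
    limsup (fun n => c + v n) atTop = c + limsup v atTop := by
  have hm : Monotone fun t : ℝ => c + t := fun _ _ h => add_le_add_right h c
  exact (hm.map_limsup_of_continuousAt v (continuous_const.add continuous_id).continuousAt
    h1 h2.isCoboundedUnder_le).symm

lemma aux_limsup_add {u v : ℕ → ℝ} {a : ℝ} (hu : Tendsto u atTop (𝓝 a))
    (h1 : IsBoundedUnder (· ≤ ·) atTop v) (h2 : IsBoundedUnder (· ≥ ·) atTop v) :
    limsup (fun n => u n + v n) atTop = a + limsup v atTop := by
  have hub : IsBoundedUnder (· ≤ ·) atTop u := hu.isBoundedUnder_le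
  have hub' : IsBoundedUnder (· ≥ ·) atTop u := hu.isBoundedUnder_ge
  apply le_antisymm
  · refine le_of_forall_pos_le_add fun ε hε => ?_
    have hev : ∀ᶠ n in atTop, u n + v n ≤ (a + ε) + v n := by
      filter_upwards [hu.eventually (eventually_le_nhds (lt_add_of_pos_right a hε))] with n hn
        using add_le_add_left hn _
    calc limsup (fun n => u n + v n) atTop ≤ limsup (fun n => (a + ε) + v n) atTop := by
          refine limsup_le_limsup hev ((isBoundedUnder_ge_add hub' h2).isCoboundedUnder_le) ?_
          exact isBoundedUnder_le_add (isBoundedUnder_const (a := a + ε)) h1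
    _ = a + ε + limsup v atTop := aux_limsup_const_add _ _ h1 h2
    _ = a + limsup v atTop + ε := by ring
  · refine le_of_forall_pos_le_add fun ε hε => ?_
    have hev : ∀ᶠ n in atTop, (a - ε) + v n ≤ u n + v n := by
      filter_upwards [hu.eventually (eventually_ge_nhds (sub_lt_self a hε))] with n hn
        using add_le_add_left hn _
    have h := limsup_le_limsup hev
      ((isBoundedUnder_ge_add (isBoundedUnder_const (a := a - ε)) h2).isCoboundedUnder_le)
      (isBoundedUnder_le_add hub h1)
    rw [aux_limsup_const_add _ _ h1 h2] at h
    linarith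

set_option maxHeartbeats 1600000 in
theorem stmt8 (p : ℝ≥0∞) [Fact (1 ≤ p)] (hp : 1 < p) (hp' : p ≠ ⊤)
    (x : ℕ → lp (fun _ : ℕ => ℝ) p)
    (hweak : ∀ f : lp (fun _ : ℕ => ℝ) p →L[ℝ] ℝ,
      Tendsto (fun n => f (x n)) atTop (𝓝 0))
    (y : lp (fun _ : ℕ => ℝ) p) :
    limsup (fun n => ‖x n + y‖ ^ p.toReal) atTop =
      limsup (fun n => ‖x n‖ ^ p.toReal) atTop + ‖y‖ ^ p.toReal := by
  have hp0 : p ≠ 0 := (zero_lt_one.trans_le (Fact.out : 1 ≤ p)).ne'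
  set r := p.toReal with hrdef
  have hr1 : 1 < r := by
    have := (ENNReal.toReal_lt_toReal (by simp) hp').mpr hp
    simpa using this
  have hr0 : 0 < r := zero_lt_one.trans hr1
  -- coordinatewise convergence
  have coord : ∀ k : ℕ, Tendsto (fun n => (x n : ∀ _ : ℕ, ℝ) k) atTop (𝓝 0) := by
    intro k
    let f : lp (fun _ : ℕ => ℝ) p →L[ℝ] ℝ :=
      LinearMap.mkContinuous
        { toFun := fun g => g k
          map_add' := fun a b => by simp [lp.coeFn_add]
          map_smul' := fun c a => by simp [lp.coeFn_smul] }
        1 (fun g => by rw [one_mul]; exact lp.norm_apply_le_norm hp0 g k)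
    exact hweak f
  -- uniform bound
  obtain ⟨C, hC⟩ : ∃ C : ℝ, ∀ n, ‖x n‖ ≤ C := by
    have h1 : ∀ f : StrongDual ℝ (lp (fun _ : ℕ => ℝ) p), ∃ C, ∀ n,
        ‖NormedSpace.inclusionInDoubleDual ℝ _ (x n) f‖ ≤ C := by
      intro f
      obtain ⟨C, hC⟩ := ((hweak f).norm.bddAbove_range)
      exact ⟨C, fun n => by simpa using hC ⟨n, rfl⟩⟩
    obtain ⟨C', hC'⟩ := banach_steinhaus h1
    refine ⟨C', fun n => ?_⟩
    have h2 := (NormedSpace.inclusionInDoubleDualLi ℝ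
      (E := lp (fun _ : ℕ => ℝ) p)).norm_map (x n)
    have h3 : (NormedSpace.inclusionInDoubleDualLi ℝ (E := lp (fun _ : ℕ => ℝ) p)) (x n)
        = NormedSpace.inclusionInDoubleDual ℝ _ (x n) := rfl
    rw [h3] at h2
    rw [← h2]; exact hC' n
  have hC0 : 0 ≤ C := le_trans (norm_nonneg _) (hC 0)
  -- basic norm formulas
  have hnorm : ∀ f : lp (fun _ : ℕ => ℝ) p, ‖f‖ ^ r = ∑' k, ‖(f : ∀ _ : ℕ, ℝ) k‖ ^ r :=
    fun f => lp.norm_rpow_eq_tsum hr0 f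
  have hsumm : ∀ f : lp (fun _ : ℕ => ℝ) p, Summable fun k => ‖(f : ∀ _ : ℕ, ℝ) k‖ ^ r :=
    fun f => (lp.memℓp f).summable hr0
  have hadd : ∀ (f g : lp (fun _ : ℕ => ℝ) p) (k : ℕ),
      ((f + g : lp (fun _ : ℕ => ℝ) p) : ∀ _ : ℕ, ℝ) k = f k + g k := fun f g k => by
    rw [lp.coeFn_add]; rfl
  have hsx : ∀ n, Summable fun k => ‖(x n : ∀ _ : ℕ, ℝ) k‖ ^ r := fun n => hsumm (x n)
  have hsy : Summable fun k => ‖(y : ∀ _ : ℕ, ℝ) k‖ ^ r := hsumm y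
  have hsxy : ∀ n, Summable fun k => ‖(x n : ∀ _ : ℕ, ℝ) k + (y : ∀ _ : ℕ, ℝ) k‖ ^ r :=
    fun n => (hsumm (x n + y)).congr (fun k => by rw [hadd])
  set S : ℕ → ℝ := fun n => ‖x n‖ ^ r with hSdef
  set F : ℕ → ℝ := fun n => ‖x n + y‖ ^ r with hFdef
  have hS0 : ∀ n, 0 ≤ S n := fun n => Real.rpow_nonneg (norm_nonneg _) _
  have hF0 : ∀ n, 0 ≤ F n := fun n => Real.rpow_nonneg (norm_nonneg _) _
  have hSle : ∀ n, S n ≤ C ^ r := fun n => Real.rpow_le_rpow (norm_nonneg _) (hC n) hr0.le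
  set D : ℝ := (C + ‖y‖) ^ r with hDdef
  have hD0 : 0 ≤ D := Real.rpow_nonneg (by positivity) _
  have hFle : ∀ n, F n ≤ D := fun n => Real.rpow_le_rpow (norm_nonneg _)
    ((norm_add_le _ _).trans (add_le_add_left (hC n) _)) hr0.le
  have hSbdd : IsBoundedUnder (· ≤ ·) atTop S := isBoundedUnder_of ⟨C ^ r, hSle⟩
  have hSbdd' : IsBoundedUnder (· ≥ ·) atTop S := isBoundedUnder_of ⟨0, hS0⟩
  have hFbdd : IsBoundedUnder (· ≤ ·) atTop F := isBoundedUnder_of ⟨D, hFle⟩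
  have hFbdd' : IsBoundedUnder (· ≥ ·) atTop F := isBoundedUnder_of ⟨0, hF0⟩
  -- splittings
  have hFsplit : ∀ (N : ℕ) (n : ℕ), F n =
      (∑ k ∈ Finset.range N, ‖(x n : ∀ _ : ℕ, ℝ) k + (y : ∀ _ : ℕ, ℝ) k‖ ^ r)
        + ∑' k, ‖(x n : ∀ _ : ℕ, ℝ) (k + N) + (y : ∀ _ : ℕ, ℝ) (k + N)‖ ^ r := by
    intro N n
    have h1 : F n = ∑' k, ‖(x n : ∀ _ : ℕ, ℝ) k + (y : ∀ _ : ℕ, ℝ) k‖ ^ r := by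
      simp only [hFdef]; rw [hnorm (x n + y)]
      exact tsum_congr fun k => by rw [hadd]
    rw [h1, ← Summable.sum_add_tsum_nat_add N (hsxy n)]
  have hSsplit : ∀ (N : ℕ) (n : ℕ), S n =
      (∑ k ∈ Finset.range N, ‖(x n : ∀ _ : ℕ, ℝ) k‖ ^ r)
        + ∑' k, ‖(x n : ∀ _ : ℕ, ℝ) (k + N)‖ ^ r := by
    intro N n
    simp only [hSdef]; rw [hnorm (x n), ← Summable.sum_add_tsum_nat_add N (hsx n)]
  have hysplit : ∀ N : ℕ, ‖y‖ ^ r =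
      (∑ k ∈ Finset.range N, ‖(y : ∀ _ : ℕ, ℝ) k‖ ^ r)
        + ∑' k, ‖(y : ∀ _ : ℕ, ℝ) (k + N)‖ ^ r := by
    intro N
    rw [hnorm y, ← Summable.sum_add_tsum_nat_add N hsy]
  have hδ0 : ∀ N : ℕ, 0 ≤ ∑' k, ‖(y : ∀ _ : ℕ, ℝ) (k + N)‖ ^ r :=
    fun N => tsum_nonneg fun k => Real.rpow_nonneg (norm_nonneg _) _
  -- convergence of heads
  have hA : ∀ N : ℕ, Tendsto
      (fun n => ∑ k ∈ Finset.range N, ‖(x n : ∀ _ : ℕ, ℝ) k + (y : ∀ _ : ℕ, ℝ) k‖ ^ r)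
      atTop (𝓝 (∑ k ∈ Finset.range N, ‖(y : ∀ _ : ℕ, ℝ) k‖ ^ r)) := by
    intro N
    refine tendsto_finset_sum _ fun k _ => ?_
    have h := (((coord k).add (tendsto_const_nhds (x := (y : ∀ _ : ℕ, ℝ) k))).norm).rpow_const
      (Or.inr hr0.le)
    simpa using h
  have hhd : ∀ N : ℕ, Tendsto
      (fun n => ∑ k ∈ Finset.range N, ‖(x n : ∀ _ : ℕ, ℝ) k‖ ^ r) atTop (𝓝 0) := by
    intro N
    have h : Tendsto (fun n => ∑ k ∈ Finset.range N, ‖(x n : ∀ _ : ℕ, ℝ) k‖ ^ r) atTop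
        (𝓝 (∑ k ∈ Finset.range N, (0 : ℝ))) := by
      refine tendsto_finset_sum _ fun k _ => ?_
      have h := (((coord k).norm).rpow_const (Or.inr hr0.le))
      simpa [Real.zero_rpow hr0.ne'] using h
    simpa using h
  -- the key two-sided estimate
  have key : ∀ c : ℝ, 0 < c →
      limsup F atTop ≤ limsup S atTop + ‖y‖ ^ r + c ∧
      limsup S atTop + ‖y‖ ^ r ≤ limsup F atTop + c := by
    intro c hc
    -- choose ε
    have cont : Tendsto (fun t : ℝ => ((1 + t) ^ r - 1) * (C ^ r + D)) (𝓝 0) (𝓝 0) := by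
      have h1 : Continuous fun t : ℝ => ((1 + t) ^ r - 1) * (C ^ r + D) :=
        (((continuous_const.add continuous_id).rpow_const fun _ => Or.inr hr0.le).sub
          continuous_const).mul continuous_const
      have h2 := h1.continuousAt (x := 0)
      have h3 : ((1 + (0 : ℝ)) ^ r - 1) * (C ^ r + D) = 0 := by
        simp [Real.one_rpow]
      simpa [ContinuousAt, h3] using h2
    obtain ⟨ε, hεsmall, hεpos⟩ := (((cont.mono_left nhdsWithin_le_nhds).eventually
      (eventually_lt_nhds (half_pos hc))).and (eventually_mem_nhdsWithin (a := (0:ℝ)) (s := Set.Ioi 0))).exists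
    rw [Set.mem_Ioi] at hεpos
    set M : ℝ := (1 + ε) ^ r with hMdef
    set K : ℝ := ((1 + ε) / ε) ^ r with hKdef
    have hM1 : 1 ≤ M := Real.one_le_rpow (by linarith) hr0.le
    have hK0 : 0 ≤ K := Real.rpow_nonneg (by positivity) _
    -- choose N
    have hδtend : Tendsto (fun N : ℕ => (1 + K) * ∑' k, ‖(y : ∀ _ : ℕ, ℝ) (k + N)‖ ^ r)
        atTop (𝓝 0) := by
      have := (tendsto_sum_nat_add fun k => ‖(y : ∀ _ : ℕ, ℝ) k‖ ^ r).const_mul (1 + K)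
      simpa using this
    obtain ⟨N, hN⟩ := (hδtend.eventually (eventually_lt_nhds (half_pos hc))).exists
    set δ : ℝ := ∑' k, ‖(y : ∀ _ : ℕ, ℝ) (k + N)‖ ^ r with hδdef
    have hδnn : 0 ≤ δ := hδ0 N
    have hKδ : (1 + K) * δ < c / 2 := hN
    have hεC : (M - 1) * (C ^ r + D) < c / 2 := hεsmall
    have hM1' : 0 ≤ M - 1 := by linarith
    -- tail sums notation
    -- per-n tail estimates
    have s2 : ∀ n, Summable fun k => ‖(x n : ∀ _ : ℕ, ℝ) (k + N)‖ ^ r := fun n =>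
      (summable_nat_add_iff (f := fun k => ‖(x n : ∀ _ : ℕ, ℝ) k‖ ^ r) N).mpr (hsx n)
    have s3 : Summable fun k => ‖(y : ∀ _ : ℕ, ℝ) (k + N)‖ ^ r :=
      (summable_nat_add_iff (f := fun k => ‖(y : ∀ _ : ℕ, ℝ) k‖ ^ r) N).mpr hsy
    have s1 : ∀ n, Summable fun k =>
        ‖(x n : ∀ _ : ℕ, ℝ) (k + N) + (y : ∀ _ : ℕ, ℝ) (k + N)‖ ^ r := fun n =>
      (summable_nat_add_iff
        (f := fun k => ‖(x n : ∀ _ : ℕ, ℝ) k + (y : ∀ _ : ℕ, ℝ) k‖ ^ r) N).mpr (hsxy n)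
    have hub : ∀ n, (∑' k, ‖(x n : ∀ _ : ℕ, ℝ) (k + N) + (y : ∀ _ : ℕ, ℝ) (k + N)‖ ^ r)
        ≤ M * (∑' k, ‖(x n : ∀ _ : ℕ, ℝ) (k + N)‖ ^ r) + K * δ := fun n =>
      aux_tail hr0 hεpos (fun k => (x n : ∀ _ : ℕ, ℝ) (k + N))
        (fun k => (y : ∀ _ : ℕ, ℝ) (k + N)) (s2 n) s3 (s1 n)
    have hlb : ∀ n, (∑' k, ‖(x n : ∀ _ : ℕ, ℝ) (k + N)‖ ^ r)
        ≤ M * (∑' k, ‖(x n : ∀ _ : ℕ, ℝ) (k + N) + (y : ∀ _ : ℕ, ℝ) (k + N)‖ ^ r) + K * δ :=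
      fun n => aux_tail' hr0 hεpos (fun k => (x n : ∀ _ : ℕ, ℝ) (k + N))
        (fun k => (y : ∀ _ : ℕ, ℝ) (k + N)) (s2 n) s3 (s1 n)
    -- abbreviations
    set A : ℕ → ℝ := fun n =>
      ∑ k ∈ Finset.range N, ‖(x n : ∀ _ : ℕ, ℝ) k + (y : ∀ _ : ℕ, ℝ) k‖ ^ r with hAdef
    set hd : ℕ → ℝ := fun n => ∑ k ∈ Finset.range N, ‖(x n : ∀ _ : ℕ, ℝ) k‖ ^ r with hhddef
    set P : ℝ := ∑ k ∈ Finset.range N, ‖(y : ∀ _ : ℕ, ℝ) k‖ ^ r with hPdef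
    have hP : ‖y‖ ^ r = P + δ := hysplit N
    have hA0 : ∀ n, 0 ≤ A n := fun n =>
      Finset.sum_nonneg fun k _ => Real.rpow_nonneg (norm_nonneg _) _
    have hhd0 : ∀ n, 0 ≤ hd n := fun n =>
      Finset.sum_nonneg fun k _ => Real.rpow_nonneg (norm_nonneg _) _
    have htailS_nn : ∀ n, 0 ≤ ∑' k, ‖(x n : ∀ _ : ℕ, ℝ) (k + N)‖ ^ r :=
      fun n => tsum_nonneg fun k => Real.rpow_nonneg (norm_nonneg _) _
    have htailF_nn : ∀ n, 0 ≤ ∑' k, ‖(x n : ∀ _ : ℕ, ℝ) (k + N) + (y : ∀ _ : ℕ, ℝ) (k + N)‖ ^ r :=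
      fun n => tsum_nonneg fun k => Real.rpow_nonneg (norm_nonneg _) _
    have htailS_le : ∀ n, (∑' k, ‖(x n : ∀ _ : ℕ, ℝ) (k + N)‖ ^ r) ≤ C ^ r := fun n => by
      have := hSsplit N n
      have := hSle n
      nlinarith [hhd0 n, hSsplit N n]
    have htailF_le : ∀ n,
        (∑' k, ‖(x n : ∀ _ : ℕ, ℝ) (k + N) + (y : ∀ _ : ℕ, ℝ) (k + N)‖ ^ r) ≤ D := fun n => by
      nlinarith [hA0 n, hFsplit N n, hFle n]
    -- upper per-n estimate : F n ≤ (A n - hd n + E) + S n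
    have hEub : ∀ n, F n ≤ (A n - hd n + ((M - 1) * C ^ r + K * δ)) + S n := by
      intro n
      have h1 := hFsplit N n
      have h2 := hSsplit N n
      have h3 := hub n
      have h4 := htailS_le n
      nlinarith [htailS_nn n]
    -- lower per-n estimate : (A n - hd n - ((M-1)*D + K*δ)) + S n ≤ F n
    have hElb : ∀ n, (A n - hd n - ((M - 1) * D + K * δ)) + S n ≤ F n := by
      intro n
      have h1 := hFsplit N n
      have h2 := hSsplit N n
      have h3 := hlb n
      have h4 := htailF_le n
      nlinarith [htailF_nn n]
    -- limsup computations
    have hGlim : Tendsto (fun n => A n - hd n + ((M - 1) * C ^ r + K * δ)) atTop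
        (𝓝 (P + ((M - 1) * C ^ r + K * δ))) := by
      have := ((hA N).sub (hhd N)).add (tendsto_const_nhds (x := (M - 1) * C ^ r + K * δ))
      simpa only [sub_zero] using this
    have hGlim' : Tendsto (fun n => A n - hd n - ((M - 1) * D + K * δ)) atTop
        (𝓝 (P - ((M - 1) * D + K * δ))) := by
      have := ((hA N).sub (hhd N)).sub (tendsto_const_nhds (x := (M - 1) * D + K * δ))
      simpa only [sub_zero] using this
    have hup : limsup F atTop ≤ (P + ((M - 1) * C ^ r + K * δ)) + limsup S atTop := by
      have h1 : limsup F atTop ≤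
          limsup (fun n => (A n - hd n + ((M - 1) * C ^ r + K * δ)) + S n) atTop := by
        refine limsup_le_limsup (Eventually.of_forall hEub) hFbdd'.isCoboundedUnder_le ?_
        exact isBoundedUnder_le_add hGlim.isBoundedUnder_le hSbdd
      rwa [aux_limsup_add hGlim hSbdd hSbdd'] at h1
    have hlo : (P - ((M - 1) * D + K * δ)) + limsup S atTop ≤ limsup F atTop := by
      have h1 : limsup (fun n => (A n - hd n - ((M - 1) * D + K * δ)) + S n) atTop ≤
          limsup F atTop := by
        refine limsup_le_limsup (Eventually.of_forall hElb) ?_ hFbdd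
        exact (isBoundedUnder_ge_add hGlim'.isBoundedUnder_ge hSbdd').isCoboundedUnder_le
      rwa [aux_limsup_add hGlim' hSbdd hSbdd'] at h1
    have hCrD : C ^ r ≤ C ^ r + D := by linarith
    have hDCr : D ≤ C ^ r + D := le_add_of_nonneg_left (by positivity)
    constructor
    · have e1 : (M - 1) * C ^ r ≤ (M - 1) * (C ^ r + D) := by nlinarith
      have e2 : K * δ ≤ (1 + K) * δ := by nlinarith
      nlinarith [hup, hP]
    · have e1 : (M - 1) * D ≤ (M - 1) * (C ^ r + D) := by nlinarith
      have e2 : δ + K * δ ≤ (1 + K) * δ := by nlinarith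
      nlinarith [hlo, hP]
  apply le_antisymm
  · exact le_of_forall_pos_le_add fun c hc => (key c hc).1
  · exact le_of_forall_pos_le_add fun c hc => (key c hc).2
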